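/- arXiv:1605.05596 — 6 statements merged into one kernel-verified Lean document; each statement's English description precedes it below -/
import Mathlib

section
/- Stein–Strömberg covering theorem for sparse radii: Let (X,d,μ) be a metric measure space such that μ satisfies a local comparability condition with constant C(μ). Let R = {r_n : n ∈ ℤ} be a T-lacunary sequence of radii with T > 1, and suppose there exists t ∈ (0,1) with T·t ≥ 1 such that μ (t,K)-microblossoms boundedly. Let B(x_1,s_1), …, B(x_M,s_M) be a finite collection of balls with s_i ∈ R and μ(B(x_i,s_i)) > 0, ordered so that s_1 ≥ s_2 ≥ … ≥ s_M, and set U = ⋃_{i=1}^M B(x_i, t·s_i). Then there exist indices i_1 < i_2 < … < i_N in {1,…,M} such that, writing D_{i_1},…,D_{i_N} for the disjointifications of the reduced balls B(x_{i_1}, t·s_{i_1}),…,B(x_{i_N}, t·s_{i_N}), one has (i) μ(U) ≤ (K+1)·μ(⋃_{j=1}^N B(x_{i_j}, t·s_{i_j})), and (ii) for every z ∈ X, Σ_{j=1}^N (μ(D_{i_j})/μ(B(x_{i_j}, s_{i_j})))·1_{B(x_{i_j}, s_{i_j})}(z) ≤ C(μ)·K + 1. -/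
open MeasureTheory Metric
open scoped ENNReal NNReal

/-- The uncentered `s`-blossom of a set `S`:
`Blu(S,s) = ⋃_{x ∈ S} ⋃ {B(y,s) : x ∈ B(y,s)}`. -/
def Blu {X : Type*} [PseudoMetricSpace X] (S : Set X) (s : ℝ) : Set X :=
  ⋃ x ∈ S, ⋃ y ∈ {y : X | x ∈ ball y s}, ball y s

namespace SSaux

lemma isOpen_Blu {X : Type*} [PseudoMetricSpace X] (S : Set X) (s : ℝ) :
    IsOpen (Blu S s) :=
  isOpen_biUnion fun _ _ => isOpen_biUnion fun _ _ => isOpen_ball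

lemma ball_subset_Blu {X : Type*} [PseudoMetricSpace X] {S : Set X} {s : ℝ} {y : X}
    (h : (ball y s ∩ S).Nonempty) : ball y s ⊆ Blu S s := by
  obtain ⟨x, hxb, hxS⟩ := h
  intro z hz
  exact Set.mem_biUnion hxS (Set.mem_biUnion (show x ∈ ball y s from hxb) hz)

section
variable {X : Type*} [MetricSpace X] [MeasurableSpace X]
variable (μ : Measure X) {M : ℕ} (c : Fin M → X) (s : Fin M → ℝ) (t : ℝ)

/-- reduced ball -/
def red (i : Fin M) : Set X := ball (c i) (t * s i)

/-- full ball -/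
def ful (i : Fin M) : Set X := ball (c i) (s i)

/-- zone relation -/
def rel (k i : Fin M) : Prop :=
  s i < s k ∧ (ball (c i) (t * s k) ∩ ball (c k) (s k)).Nonempty

/-- disjointified reduced ball relative to a finite set of selected indices -/
def DD (F : Finset (Fin M)) (k : Fin M) : Set X :=
  red c s t k \ ⋃ k' ∈ F.filter (· < k), red c s t k'

open Classical in
/-- selection condition -/
noncomputable def cond (F : Finset (Fin M)) (i : Fin M) : Prop :=
  0 < μ (red c s t i \ ⋃ k ∈ F, red c s t k) ∧
  (∑ k ∈ F.filter (fun k => rel c s t k i), μ (DD c s t F k) / μ (ful c s k)) < 1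

open Classical in
/-- the greedy selection, processed in index order -/
noncomputable def selUpTo : ℕ → Finset (Fin M)
  | 0 => ∅
  | n + 1 =>
    if h : n < M then
      if cond μ c s t (selUpTo n) ⟨n, h⟩ then insert ⟨n, h⟩ (selUpTo n)
      else selUpTo n
    else selUpTo n

/-- final selected set -/
noncomputable def sel : Finset (Fin M) := selUpTo μ c s t M

variable {μ c s t}

lemma val_lt_of_mem_selUpTo {n : ℕ} {k : Fin M} (h : k ∈ selUpTo μ c s t n) :
    (k : ℕ) < n := by
  induction n with
  | zero => simp [selUpTo] at h
  | succ n ih =>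
    rw [selUpTo] at h
    split_ifs at h with h1 h2
    · rcases Finset.mem_insert.mp h with h | h
      · subst h; exact Nat.lt_succ_self n
      · exact Nat.lt_succ_of_lt (ih h)
    · exact Nat.lt_succ_of_lt (ih h)
    · exact Nat.lt_succ_of_lt (ih h)

lemma selUpTo_mono : Monotone (selUpTo μ c s t) := by
  refine monotone_nat_of_le_succ fun n => ?_
  conv_rhs => rw [selUpTo]
  split_ifs with h1 h2
  · exact Finset.subset_insert _ _
  · exact le_rfl
  · exact le_rfl

lemma selUpTo_stable {m n : ℕ} (hmn : m ≤ n) {k : Fin M} (hk : (k : ℕ) < m) :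
    (k ∈ selUpTo μ c s t n ↔ k ∈ selUpTo μ c s t m) := by
  induction n with
  | zero => omega
  | succ n ih =>
    rcases Nat.lt_or_ge m (n + 1) with hlt | hge
    · have hmn' : m ≤ n := by omega
      rw [← ih hmn']
      conv_lhs => rw [selUpTo]
      split_ifs with h1 h2
      · rw [Finset.mem_insert]
        constructor
        · rintro (rfl | h)
          · exact absurd hk (by simp; omega)
          · exact h
        · exact Or.inr
      · rfl
      · rfl
    · have : m = n + 1 := by omega
      subst this; rfl

lemma mem_sel_of_mem_selUpTo {n : ℕ} {k : Fin M} (h : k ∈ selUpTo μ c s t n) :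
    k ∈ sel μ c s t := by
  have hkn := val_lt_of_mem_selUpTo h
  have h1 : k ∈ selUpTo μ c s t ((k : ℕ) + 1) :=
    (selUpTo_stable (Nat.succ_le_of_lt hkn) (Nat.lt_succ_self _)).mp h
  exact (selUpTo_stable (Nat.succ_le_of_lt k.isLt) (Nat.lt_succ_self _)).mpr h1

lemma sel_filter_lt (i : Fin M) :
    (sel μ c s t).filter (· < i) = selUpTo μ c s t i := by
  classical
  ext k
  simp only [Finset.mem_filter]
  constructor
  · rintro ⟨hk, hki⟩
    exact (selUpTo_stable (n := M) (m := (i : ℕ)) (le_of_lt i.isLt) hki).mp hk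
  · intro hk
    have hkv := val_lt_of_mem_selUpTo hk
    exact ⟨mem_sel_of_mem_selUpTo hk, hkv⟩

lemma mem_sel_iff (i : Fin M) :
    i ∈ sel μ c s t ↔ cond μ c s t (selUpTo μ c s t i) i := by
  classical
  rw [show sel μ c s t = selUpTo μ c s t M from rfl,
    selUpTo_stable (Nat.succ_le_of_lt i.isLt) (Nat.lt_succ_self (i : ℕ))]
  rw [selUpTo]
  rw [dif_pos i.isLt]
  have heta : (⟨(i : ℕ), i.isLt⟩ : Fin M) = i := rfl
  rw [heta]
  split_ifs with hc
  · simp only [hc, iff_true]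
    exact Finset.mem_insert_self _ _
  · simp only [hc, iff_false]
    intro h
    exact absurd (val_lt_of_mem_selUpTo h) (lt_irrefl _)


lemma selUpTo_filter_lt {n : ℕ} {k : Fin M} (hn : (k : ℕ) ≤ n) :
    (selUpTo μ c s t n).filter (· < k) = selUpTo μ c s t k := by
  classical
  ext k'
  simp only [Finset.mem_filter]
  constructor
  · rintro ⟨hk', hlt⟩
    exact (selUpTo_stable hn hlt).mp hk'
  · intro hk'
    have h1 := val_lt_of_mem_selUpTo hk'
    exact ⟨(selUpTo_stable hn h1).mpr hk', h1⟩

lemma DD_selUpTo_eq {n : ℕ} {k : Fin M} (hn : (k : ℕ) ≤ n) :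
    DD c s t (selUpTo μ c s t n) k = DD c s t (sel μ c s t) k := by
  unfold DD
  rw [selUpTo_filter_lt hn, show (sel μ c s t).filter (· < k) = selUpTo μ c s t k from
    sel_filter_lt k]

lemma DD_pairwise_disjoint :
    (↑(sel μ c s t) : Set (Fin M)).PairwiseDisjoint (DD c s t (sel μ c s t)) := by
  classical
  intro k hk k' hk' hne
  wlog hlt : k < k' generalizing k k'
  · exact (this hk' hk hne.symm ((hne.lt_or_gt).resolve_left hlt)).symm
  refine Set.disjoint_left.mpr fun x hx hx' => ?_
  have hxred : x ∈ red c s t k := hx.1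
  refine hx'.2 ?_
  refine Set.mem_biUnion ?_ hxred
  exact Finset.mem_filter.mpr ⟨Finset.mem_coe.mp hk, hlt⟩

lemma biUnion_DD_eq :
    (⋃ k ∈ sel μ c s t, DD c s t (sel μ c s t) k) = ⋃ k ∈ sel μ c s t, red c s t k := by
  classical
  apply Set.Subset.antisymm
  · exact Set.iUnion₂_mono fun k _ => Set.diff_subset
  · intro x hx
    rw [Set.mem_iUnion₂] at hx
    obtain ⟨k₀, hk₀, hxk₀⟩ := hx
    have hne : ((sel μ c s t).filter (fun k => x ∈ red c s t k)).Nonempty :=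
      ⟨k₀, Finset.mem_filter.mpr ⟨hk₀, hxk₀⟩⟩
    set J := (sel μ c s t).filter (fun k => x ∈ red c s t k) with hJ
    obtain ⟨m, hmJ, hmin⟩ := J.exists_min_image id hne
    have hmS : m ∈ sel μ c s t := (Finset.mem_filter.mp hmJ).1
    refine Set.mem_biUnion hmS ?_
    refine ⟨(Finset.mem_filter.mp hmJ).2, ?_⟩
    intro hmem
    rw [Set.mem_iUnion₂] at hmem
    obtain ⟨k', hk', hxk'⟩ := hmem
    rw [Finset.mem_filter] at hk'
    have hk'J : k' ∈ J := Finset.mem_filter.mpr ⟨hk'.1, hxk'⟩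
    exact absurd (hmin k' hk'J) (not_le.mpr hk'.2)

end
end SSaux

/-- **Stein–Strömberg covering theorem for sparse radii.** -/
theorem stein_stromberg_sparse_radii
    {X : Type*} [MetricSpace X] [MeasurableSpace X] [BorelSpace X]
    (μ : Measure X)
    -- metric measure space: finite on balls
    (hfin : ∀ (x : X) (r : ℝ), μ (ball x r) ≠ ⊤)
    -- metric measure space: τ-smoothness
    (hτ : ∀ (ι : Type*) (U : ι → Set X), (∀ i, IsOpen (U i)) →
      μ (⋃ i, U i) = ⨆ F : Finset ι, μ (⋃ i ∈ F, U i))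
    -- local comparability with constant C(μ)
    (C : ℝ) (hC : 1 ≤ C)
    (hloc : ∀ (x y : X) (r : ℝ), 0 < r → dist x y < r →
      μ (ball x r) ≤ ENNReal.ofReal C * μ (ball y r))
    -- a T-lacunary sequence of radii
    (T : ℝ) (hT : 1 < T)
    (rad : ℤ → ℝ) (hradpos : ∀ n, 0 < rad n)
    (hlac : ∀ n, T ≤ rad (n + 1) / rad n)
    -- μ (t,K)-microblossoms boundedly, with T·t ≥ 1
    (t K : ℝ) (ht0 : 0 < t) (ht1 : t < 1) (hTt : 1 ≤ T * t) (hK : 1 ≤ K)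
    (hmb : ∀ (x : X) (r : ℝ), 0 < r →
      μ (Blu (ball x r) (t * r)) ≤ ENNReal.ofReal K * μ (ball x r))
    -- a finite collection of balls with radii in R, positive measure,
    -- ordered by non-increasing radii
    (M : ℕ) (c : Fin M → X) (s : Fin M → ℝ)
    (hsR : ∀ i, s i ∈ Set.range rad)
    (hpos : ∀ i, 0 < μ (ball (c i) (s i)))
    (hord : ∀ i j : Fin M, i ≤ j → s j ≤ s i) :
    ∃ (N : ℕ) (σ : Fin N → Fin M), StrictMono σ ∧
      μ (⋃ i, ball (c i) (t * s i)) ≤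
        ENNReal.ofReal (K + 1) * μ (⋃ j, ball (c (σ j)) (t * s (σ j))) ∧
      ∀ z : X,
        ∑ j : Fin N,
          (ball (c (σ j)) (s (σ j))).indicator
            (fun _ => μ (ball (c (σ j)) (t * s (σ j)) \
                ⋃ k, ⋃ (_ : k < j), ball (c (σ k)) (t * s (σ k))) /
              μ (ball (c (σ j)) (s (σ j)))) z
          ≤ ENNReal.ofReal (C * K + 1) := by
  classical
  -- positivity of radii
  have spos : ∀ i, 0 < s i := fun i => by
    obtain ⟨n, hn⟩ := hsR i
    rw [← hn]; exact hradpos n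
  have radmono : StrictMono rad := by
    refine strictMono_int_of_lt_succ fun n => ?_
    have h1 : T * rad n ≤ rad (n + 1) := (le_div_iff₀ (hradpos n)).mp (hlac n)
    nlinarith [hradpos n]
  have hTle : ∀ {i k : Fin M}, s i < s k → T * s i ≤ s k := by
    intro i k h
    obtain ⟨m, hm⟩ := hsR i
    obtain ⟨n, hn⟩ := hsR k
    rw [← hm, ← hn] at h ⊢
    have hmn : m < n := radmono.lt_iff_lt.mp h
    have h2 : rad (m + 1) ≤ rad n := radmono.monotone (by omega)
    have h3 : T * rad m ≤ rad (m + 1) := (le_div_iff₀ (hradpos m)).mp (hlac m)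
    linarith
  have hL1 : ∀ {i k : Fin M}, s i < s k → s i ≤ t * s k := by
    intro i k h
    have h1 := hTle h
    nlinarith [spos i]
  set S : Finset (Fin M) := SSaux.sel μ c s t with hSdef
  set σfun : Fin S.card → Fin M := fun j => ((S.orderIsoOfFin rfl) j : Fin M) with hσdef
  have hσS : ∀ j, σfun j ∈ S := fun j => ((S.orderIsoOfFin rfl) j).2
  have hσmono : StrictMono σfun := fun a b h =>
    Subtype.coe_lt_coe.mpr ((S.orderIsoOfFin rfl).strictMono h)
  have hσlt : ∀ a b, σfun a < σfun b ↔ a < b := fun a b =>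
    Subtype.coe_lt_coe.trans ((S.orderIsoOfFin rfl).lt_iff_lt)
  have hσsurj : ∀ m ∈ S, ∃ j, σfun j = m := fun m hm =>
    ⟨(S.orderIsoOfFin rfl).symm ⟨m, hm⟩, by
      show ((S.orderIsoOfFin rfl) ((S.orderIsoOfFin rfl).symm ⟨m, hm⟩) : Fin M) = m
      rw [OrderIso.apply_symm_apply]⟩
  -- abbreviations
  have hful_ne : ∀ k, μ (SSaux.ful c s k) ≠ 0 := fun k => (hpos k).ne'
  have hful_top : ∀ k, μ (SSaux.ful c s k) ≠ ⊤ := fun k => hfin _ _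
  have hDmeas : ∀ k, MeasurableSet (SSaux.DD c s t S k) := by
    intro k
    unfold SSaux.DD SSaux.red
    exact isOpen_ball.measurableSet.diff
      (isOpen_biUnion fun _ _ => isOpen_ball).measurableSet
  have hDsub : ∀ k, SSaux.DD c s t S k ⊆ SSaux.red c s t k := fun k => Set.diff_subset
  have hμD_sum : ∑ k ∈ S, μ (SSaux.DD c s t S k) = μ (⋃ m ∈ S, SSaux.red c s t m) := by
    rw [← measure_biUnion_finset SSaux.DD_pairwise_disjoint (fun k _ => hDmeas k)]
    rw [SSaux.biUnion_DD_eq]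
  have hUV : (⋃ j, ball (c (σfun j)) (t * s (σfun j))) = ⋃ m ∈ S, SSaux.red c s t m := by
    ext x
    simp only [Set.mem_iUnion, exists_prop]
    constructor
    · rintro ⟨j, hj⟩
      exact ⟨σfun j, hσS j, hj⟩
    · rintro ⟨m, hm, hx⟩
      obtain ⟨j, rfl⟩ := hσsurj m hm
      exact ⟨j, hx⟩
  refine ⟨S.card, σfun, hσmono, ?_, ?_⟩
  · -- part (i)
    -- Chebyshev function
    set w : Fin M → ℝ≥0∞ := fun k => μ (SSaux.DD c s t S k) / μ (SSaux.ful c s k) with hwdef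
    set Yb : Fin M → Set X := fun k => Blu (SSaux.ful c s k) (t * s k) with hYdef
    set f : X → ℝ≥0∞ := fun x => ∑ k ∈ S, (Yb k).indicator (fun _ => w k) x with hfdef
    have hYopen : ∀ k, IsOpen (Yb k) := fun k => SSaux.isOpen_Blu _ _
    have hfmeas : Measurable f := by
      apply Finset.measurable_sum
      intro k _
      exact measurable_const.indicator (hYopen k).measurableSet
    have hlint : ∫⁻ x, f x ∂μ ≤ ENNReal.ofReal K * μ (⋃ m ∈ S, SSaux.red c s t m) := by
      rw [hfdef]
      rw [lintegral_finset_sum _ (fun k _ => measurable_const.indicator (hYopen k).measurableSet)]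
      calc ∑ k ∈ S, ∫⁻ x, (Yb k).indicator (fun _ => w k) x ∂μ
          = ∑ k ∈ S, w k * μ (Yb k) := by
            refine Finset.sum_congr rfl fun k _ => ?_
            exact lintegral_indicator_const (hYopen k).measurableSet _
        _ ≤ ∑ k ∈ S, w k * (ENNReal.ofReal K * μ (SSaux.ful c s k)) := by
            refine Finset.sum_le_sum fun k _ => ?_
            exact mul_le_mul_right (hmb (c k) (s k) (spos k)) _
        _ = ∑ k ∈ S, ENNReal.ofReal K * μ (SSaux.DD c s t S k) := by
            refine Finset.sum_congr rfl fun k _ => ?_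
            rw [hwdef]
            rw [show μ (SSaux.DD c s t S k) / μ (SSaux.ful c s k) *
                (ENNReal.ofReal K * μ (SSaux.ful c s k)) =
                ENNReal.ofReal K *
                  (μ (SSaux.DD c s t S k) / μ (SSaux.ful c s k) * μ (SSaux.ful c s k)) by ring]
            rw [ENNReal.div_mul_cancel (hful_ne k) (hful_top k)]
        _ = ENNReal.ofReal K * μ (⋃ m ∈ S, SSaux.red c s t m) := by
            rw [← Finset.mul_sum, hμD_sum]
    have hcheb : μ {x | 1 ≤ f x} ≤ ENNReal.ofReal K * μ (⋃ m ∈ S, SSaux.red c s t m) := by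
      have h1 := mul_meas_ge_le_lintegral₀ (μ := μ) hfmeas.aemeasurable 1
      rw [one_mul] at h1
      exact h1.trans hlint
    -- the null leftovers
    set NN : Fin M → Set X := fun i =>
      if i ∉ S ∧ μ (SSaux.red c s t i \ ⋃ k ∈ SSaux.selUpTo μ c s t (i : ℕ), SSaux.red c s t k) = 0
      then SSaux.red c s t i \ ⋃ k ∈ SSaux.selUpTo μ c s t (i : ℕ), SSaux.red c s t k
      else ∅ with hNNdef
    have hNNnull : ∀ i, μ (NN i) = 0 := by
      intro i
      rw [hNNdef]
      by_cases h : i ∉ S ∧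
          μ (SSaux.red c s t i \ ⋃ k ∈ SSaux.selUpTo μ c s t (i : ℕ), SSaux.red c s t k) = 0
      · simp only [if_pos h]; exact h.2
      · simp only [if_neg h]; exact measure_empty
    -- coverage
    have hcov : (⋃ i, ball (c i) (t * s i)) ⊆
        ((⋃ m ∈ S, SSaux.red c s t m) ∪ {x | 1 ≤ f x}) ∪ ⋃ i : Fin M, NN i := by
      intro z hz
      obtain ⟨i, hzi⟩ := Set.mem_iUnion.mp hz
      have hzi' : z ∈ SSaux.red c s t i := hzi
      by_cases hiS : i ∈ S
      · exact Or.inl (Or.inl (Set.mem_biUnion hiS hzi'))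
      · have hnc : ¬ (0 < μ (SSaux.red c s t i \
              ⋃ k ∈ SSaux.selUpTo μ c s t (i : ℕ), SSaux.red c s t k) ∧
            (∑ k ∈ (SSaux.selUpTo μ c s t (i : ℕ)).filter (fun k => SSaux.rel c s t k i),
              μ (SSaux.DD c s t (SSaux.selUpTo μ c s t (i : ℕ)) k) / μ (SSaux.ful c s k)) < 1) :=
          fun hcnd => hiS ((SSaux.mem_sel_iff i).mpr hcnd)
        by_cases hc1 : 0 < μ (SSaux.red c s t i \
            ⋃ k ∈ SSaux.selUpTo μ c s t (i : ℕ), SSaux.red c s t k)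
        · have hc2 := not_lt.mp fun h2 => hnc ⟨hc1, h2⟩
          refine Or.inl (Or.inr ?_)
          show 1 ≤ f z
          set zone := (SSaux.selUpTo μ c s t (i : ℕ)).filter (fun k => SSaux.rel c s t k i)
            with hzonedef
          have hzonesub : zone ⊆ S := fun k hk =>
            SSaux.mem_sel_of_mem_selUpTo (Finset.mem_filter.mp hk).1
          have hzY : ∀ k ∈ zone, z ∈ Yb k := by
            intro k hk
            obtain ⟨hkmem, hsik, hne⟩ := Finset.mem_filter.mp hk
            have h1 : z ∈ ball (c i) (t * s k) := by
              have hz1 : dist z (c i) < t * s i := mem_ball.mp hzi'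
              have h2 : t * s i ≤ t * s k := by nlinarith [spos i]
              exact mem_ball.mpr (lt_of_lt_of_le hz1 h2)
            exact SSaux.ball_subset_Blu hne h1
          have hDDe : ∀ k ∈ zone,
              SSaux.DD c s t (SSaux.selUpTo μ c s t (i : ℕ)) k = SSaux.DD c s t S k := by
            intro k hk
            exact SSaux.DD_selUpTo_eq
              (le_of_lt (SSaux.val_lt_of_mem_selUpTo (Finset.mem_filter.mp hk).1))
          calc (1 : ℝ≥0∞) ≤ ∑ k ∈ zone,
                μ (SSaux.DD c s t (SSaux.selUpTo μ c s t (i : ℕ)) k) / μ (SSaux.ful c s k) := hc2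
            _ = ∑ k ∈ zone, (Yb k).indicator (fun _ => w k) z := by
                refine Finset.sum_congr rfl fun k hk => ?_
                rw [Set.indicator_of_mem (hzY k hk), hwdef, hDDe k hk]
            _ ≤ f z := Finset.sum_le_sum_of_subset hzonesub
        · have hc1' : μ (SSaux.red c s t i \
              ⋃ k ∈ SSaux.selUpTo μ c s t (i : ℕ), SSaux.red c s t k) = 0 := by
            by_contra h
            exact hc1 (pos_iff_ne_zero.mpr h)
          by_cases hzW : z ∈ ⋃ k ∈ SSaux.selUpTo μ c s t (i : ℕ), SSaux.red c s t k
          · obtain ⟨k, hk, hzk⟩ := Set.mem_iUnion₂.mp hzW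
            exact Or.inl (Or.inl (Set.mem_biUnion (SSaux.mem_sel_of_mem_selUpTo hk) hzk))
          · refine Or.inr (Set.mem_iUnion.mpr ⟨i, ?_⟩)
            rw [hNNdef]
            simp only [if_pos (And.intro hiS hc1')]
            exact ⟨hzi', hzW⟩
    -- conclude part (i)
    have hofK : ENNReal.ofReal (K + 1) = ENNReal.ofReal K + 1 := by
      rw [ENNReal.ofReal_add (by linarith) zero_le_one, ENNReal.ofReal_one]
    calc μ (⋃ i, ball (c i) (t * s i))
        ≤ μ (((⋃ m ∈ S, SSaux.red c s t m) ∪ {x | 1 ≤ f x}) ∪ ⋃ i : Fin M, NN i) :=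
          measure_mono hcov
      _ ≤ μ ((⋃ m ∈ S, SSaux.red c s t m) ∪ {x | 1 ≤ f x}) + μ (⋃ i : Fin M, NN i) :=
          measure_union_le _ _
      _ ≤ (μ (⋃ m ∈ S, SSaux.red c s t m) + μ {x | 1 ≤ f x}) + 0 := by
          refine add_le_add (measure_union_le _ _) (le_of_eq (measure_iUnion_null hNNnull))
      _ ≤ (μ (⋃ m ∈ S, SSaux.red c s t m) +
            ENNReal.ofReal K * μ (⋃ m ∈ S, SSaux.red c s t m)) + 0 := by
          exact add_le_add (add_le_add le_rfl hcheb) le_rfl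
      _ = ENNReal.ofReal (K + 1) * μ (⋃ m ∈ S, SSaux.red c s t m) := by
          rw [hofK, add_zero, add_mul, one_mul, add_comm]
      _ = ENNReal.ofReal (K + 1) * μ (⋃ j, ball (c (σfun j)) (t * s (σfun j))) := by
          rw [hUV]
  · -- part (ii)
    intro z
    have hDthm : ∀ j : Fin S.card,
        (ball (c (σfun j)) (t * s (σfun j)) \
          ⋃ k, ⋃ (_ : k < j), ball (c (σfun k)) (t * s (σfun k)))
          = SSaux.DD c s t S (σfun j) := by
      intro j
      unfold SSaux.DD SSaux.red
      congr 1
      ext x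
      simp only [Set.mem_iUnion, exists_prop]
      constructor
      · rintro ⟨k, hk, hx⟩
        exact ⟨σfun k, Finset.mem_filter.mpr ⟨hσS k, (hσlt k j).mpr hk⟩, hx⟩
      · rintro ⟨m, hm, hx⟩
        rw [Finset.mem_filter] at hm
        obtain ⟨j', rfl⟩ := hσsurj m hm.1
        exact ⟨j', (hσlt j' j).mp hm.2, hx⟩
    have hsum0 : ∀ g : Fin M → ℝ≥0∞, (∑ j : Fin S.card, g (σfun j)) = ∑ m ∈ S, g m := by
      intro g
      rw [← Finset.sum_coe_sort S g]
      exact Fintype.sum_equiv (S.orderIsoOfFin rfl).toEquiv _ _ (fun j => rfl)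
    set J := S.filter (fun m => z ∈ SSaux.ful c s m) with hJdef
    have hstep1 : (∑ j : Fin S.card,
        (ball (c (σfun j)) (s (σfun j))).indicator
          (fun _ => μ (ball (c (σfun j)) (t * s (σfun j)) \
              ⋃ k, ⋃ (_ : k < j), ball (c (σfun k)) (t * s (σfun k))) /
            μ (ball (c (σfun j)) (s (σfun j)))) z)
        = ∑ m ∈ J, μ (SSaux.DD c s t S m) / μ (SSaux.ful c s m) := by
      rw [show (∑ j : Fin S.card,
          (ball (c (σfun j)) (s (σfun j))).indicator
            (fun _ => μ (ball (c (σfun j)) (t * s (σfun j)) \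
                ⋃ k, ⋃ (_ : k < j), ball (c (σfun k)) (t * s (σfun k))) /
              μ (ball (c (σfun j)) (s (σfun j)))) z)
          = ∑ j : Fin S.card,
            (SSaux.ful c s (σfun j)).indicator
              (fun _ => μ (SSaux.DD c s t S (σfun j)) / μ (SSaux.ful c s (σfun j))) z from
        Finset.sum_congr rfl fun j _ => by rw [hDthm j]; rfl]
      rw [hsum0 (fun m => (SSaux.ful c s m).indicator
        (fun _ => μ (SSaux.DD c s t S m) / μ (SSaux.ful c s m)) z)]
      rw [Finset.sum_indicator_eq_sum_filter]
    rw [hstep1]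
    rcases Finset.eq_empty_or_nonempty J with hJe | hJne
    · rw [hJe]
      simp only [Finset.sum_empty]
      exact zero_le
    obtain ⟨b, hbJ, hbmin⟩ := J.exists_min_image s hJne
    have hbS : b ∈ S := (Finset.mem_filter.mp hbJ).1
    have hzb : z ∈ SSaux.ful c s b := (Finset.mem_filter.mp hbJ).2
    -- split the sum at the bottom scale
    rw [← Finset.sum_filter_add_sum_filter_not J (fun k => s b < s k)
      (fun m => μ (SSaux.DD c s t S m) / μ (SSaux.ful c s m))]
    have hofCK : ENNReal.ofReal (C * K + 1) = 1 + ENNReal.ofReal (C * K) := by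
      rw [ENNReal.ofReal_add (by positivity) zero_le_one, ENNReal.ofReal_one, add_comm]
    rw [hofCK]
    refine add_le_add ?_ ?_
    · -- higher scales: < 1 by the selection rule
      have hcondb := (SSaux.mem_sel_iff b).mp hbS
      have hlt1 := hcondb.2
      set zone := (SSaux.selUpTo μ c s t (b : ℕ)).filter (fun k => SSaux.rel c s t k b)
        with hzonedef
      have hsubzone : J.filter (fun k => s b < s k) ⊆ zone := by
        intro k hk
        obtain ⟨hkJ, hsbk⟩ := Finset.mem_filter.mp hk
        obtain ⟨hkS, hzk⟩ := Finset.mem_filter.mp hkJ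
        have hkb : k < b := by
          rcases lt_or_ge k b with h | h
          · exact h
          · exact absurd (hord b k h) (not_le.mpr hsbk)
        refine Finset.mem_filter.mpr ⟨?_, ?_⟩
        · rw [← SSaux.sel_filter_lt b]
          exact Finset.mem_filter.mpr ⟨hkS, hkb⟩
        · refine ⟨hsbk, ⟨z, ?_, hzk⟩⟩
          have h1 : dist z (c b) < s b := mem_ball.mp hzb
          have h2 : s b ≤ t * s k := hL1 hsbk
          exact mem_ball.mpr (lt_of_lt_of_le h1 h2)
      have hDDe : ∀ k ∈ zone,
          SSaux.DD c s t (SSaux.selUpTo μ c s t (b : ℕ)) k = SSaux.DD c s t S k := by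
        intro k hk
        exact SSaux.DD_selUpTo_eq
          (le_of_lt (SSaux.val_lt_of_mem_selUpTo (Finset.mem_filter.mp hk).1))
      calc ∑ k ∈ J.filter (fun k => s b < s k), μ (SSaux.DD c s t S k) / μ (SSaux.ful c s k)
          ≤ ∑ k ∈ zone, μ (SSaux.DD c s t S k) / μ (SSaux.ful c s k) :=
            Finset.sum_le_sum_of_subset hsubzone
        _ = ∑ k ∈ zone,
              μ (SSaux.DD c s t (SSaux.selUpTo μ c s t (b : ℕ)) k) / μ (SSaux.ful c s k) :=
            Finset.sum_congr rfl fun k hk => by rw [hDDe k hk]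
        _ ≤ 1 := le_of_lt hlt1
    · -- bottom scale: ≤ C·K by microblossoming and local comparability
      set J0 := J.filter (fun k => ¬ s b < s k) with hJ0def
      have hJ0eq : ∀ k ∈ J0, s k = s b := by
        intro k hk
        obtain ⟨hkJ, hnlt⟩ := Finset.mem_filter.mp hk
        exact le_antisymm (not_lt.mp hnlt) (hbmin k hkJ)
      have hJ0S : ∀ k ∈ J0, k ∈ S := fun k hk =>
        (Finset.mem_filter.mp (Finset.mem_filter.mp hk).1).1
      have hJ0z : ∀ k ∈ J0, z ∈ SSaux.ful c s k := fun k hk =>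
        (Finset.mem_filter.mp (Finset.mem_filter.mp hk).1).2
      set m0 := μ (ball z (s b)) with hm0def
      have hm0_ne : m0 ≠ 0 := by
        intro h0
        have h1 := hloc (c b) z (s b) (spos b) (by
          rw [dist_comm]; exact mem_ball.mp hzb)
        rw [hm0def] at h0
        rw [h0, mul_zero] at h1
        exact (hpos b).ne' (le_antisymm h1 zero_le)
      have hm0_top : m0 ≠ ⊤ := by
        have h1 := hloc z (c b) (s b) (spos b) (mem_ball.mp hzb)
        exact ne_top_of_le_ne_top (ENNReal.mul_ne_top ENNReal.ofReal_ne_top (hfin _ _)) h1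
      have hsubW : ∀ k ∈ J0, SSaux.DD c s t S k ⊆ Blu (ball z (s b)) (t * s b) := by
        intro k hk x hx
        have hskb := hJ0eq k hk
        have h1 : x ∈ ball (c k) (t * s b) := by
          rw [← hskb]
          exact hDsub k hx
        refine SSaux.ball_subset_Blu ⟨c k, ?_, ?_⟩ h1
        · exact mem_ball_self (mul_pos ht0 (spos b))
        · have := mem_ball.mp (hJ0z k hk)
          rw [hskb] at this
          rw [mem_ball, dist_comm]
          exact this
      have hsumD : ∑ k ∈ J0, μ (SSaux.DD c s t S k) ≤ ENNReal.ofReal K * m0 := by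
        have hdisj : (↑J0 : Set (Fin M)).PairwiseDisjoint (SSaux.DD c s t S) :=
          SSaux.DD_pairwise_disjoint.subset (fun k hk => hJ0S k hk)
        calc ∑ k ∈ J0, μ (SSaux.DD c s t S k)
            = μ (⋃ k ∈ J0, SSaux.DD c s t S k) :=
              (measure_biUnion_finset hdisj (fun k _ => hDmeas k)).symm
          _ ≤ μ (Blu (ball z (s b)) (t * s b)) := measure_mono (Set.iUnion₂_subset hsubW)
          _ ≤ ENNReal.ofReal K * m0 := hmb z (s b) (spos b)
      have hterm : ∀ k ∈ J0, μ (SSaux.DD c s t S k) / μ (SSaux.ful c s k) ≤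
          ENNReal.ofReal C * μ (SSaux.DD c s t S k) / m0 := by
        intro k hk
        have hskb := hJ0eq k hk
        have hmle : m0 ≤ ENNReal.ofReal C * μ (SSaux.ful c s k) := by
          rw [hm0def, ← hskb]
          exact hloc z (c k) (s k) (spos k) (mem_ball.mp (hJ0z k hk))
        rw [ENNReal.le_div_iff_mul_le (Or.inl hm0_ne) (Or.inl hm0_top)]
        calc μ (SSaux.DD c s t S k) / μ (SSaux.ful c s k) * m0
            ≤ μ (SSaux.DD c s t S k) / μ (SSaux.ful c s k) *
              (ENNReal.ofReal C * μ (SSaux.ful c s k)) := mul_le_mul_right hmle _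
          _ = ENNReal.ofReal C *
              (μ (SSaux.DD c s t S k) / μ (SSaux.ful c s k) * μ (SSaux.ful c s k)) := by ring
          _ = ENNReal.ofReal C * μ (SSaux.DD c s t S k) := by
              rw [ENNReal.div_mul_cancel (hful_ne k) (hful_top k)]
      calc ∑ k ∈ J0, μ (SSaux.DD c s t S k) / μ (SSaux.ful c s k)
          ≤ ∑ k ∈ J0, ENNReal.ofReal C * μ (SSaux.DD c s t S k) / m0 :=
            Finset.sum_le_sum hterm
        _ = (∑ k ∈ J0, ENNReal.ofReal C * μ (SSaux.DD c s t S k)) / m0 := by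
            simp only [div_eq_mul_inv, ← Finset.sum_mul]
        _ = (ENNReal.ofReal C * ∑ k ∈ J0, μ (SSaux.DD c s t S k)) / m0 := by
            rw [← Finset.mul_sum]
        _ ≤ (ENNReal.ofReal C * (ENNReal.ofReal K * m0)) / m0 :=
            ENNReal.div_le_div_right (mul_le_mul_right hsumD _) _
        _ = ENNReal.ofReal C * ENNReal.ofReal K := by
            rw [← mul_assoc, mul_div_assoc, ENNReal.div_self hm0_ne hm0_top, mul_one]
        _ = ENNReal.ofReal (C * K) := (ENNReal.ofReal_mul (by linarith)).symm
end

section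
/- Let (X,d) be a metric space. The following are equivalent: (a) X has the approximate midpoint property; (b) for all x ∈ X and all r, s > 0, Bl(x,r,s) = B(x,r+s); (c) for all x ∈ X and all r > 0, Bl(x,r,r) = B(x,2r). -/
open Metric

/-- The `s`-blossom of a set `S`: `Bl(S,s) = ⋃_{x ∈ S} B(x,s)`. -/
def Bl {X : Type*} [PseudoMetricSpace X] (S : Set X) (s : ℝ) : Set X :=
  ⋃ x ∈ S, ball x s

/-- A metric space has the approximate midpoint property if for every `ε > 0`
and every pair of points `x, y` there is a point `z` with
`d(x,z), d(z,y) < ε + d(x,y)/2`. -/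
def ApproxMidpointProperty (X : Type*) [PseudoMetricSpace X] : Prop :=
  ∀ ε : ℝ, 0 < ε → ∀ x y : X, ∃ z : X,
    dist x z < ε + dist x y / 2 ∧ dist z y < ε + dist x y / 2

/-- Dyadic approximate points: from the approximate midpoint property, for each
dyadic `k/2^n ∈ [0,1]` there is an approximate `k/2^n`-point between `x` and `y`. -/
lemma dyadic_point {X : Type*} [MetricSpace X] (h : ApproxMidpointProperty X) :
    ∀ n : ℕ, ∀ x y : X, ∀ k : ℕ, k ≤ 2 ^ n → ∀ ε : ℝ, 0 < ε →
      ∃ z : X, dist x z < ((k : ℝ) / 2 ^ n) * dist x y + ε ∧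
        dist z y < (1 - (k : ℝ) / 2 ^ n) * dist x y + ε := by
  intro n
  induction n with
  | zero =>
    intro x y k hk ε hε
    interval_cases k
    · exact ⟨x, by simpa using hε, by simp; nlinarith [dist_nonneg (x := x) (y := y)]⟩
    · exact ⟨y, by simp; nlinarith [dist_nonneg (x := x) (y := y)], by simpa using hε⟩
  | succ n ih =>
    intro x y k hk ε hε
    obtain ⟨m, hm1, hm2⟩ := h (ε / 4) (by linarith) x y
    have hN : (0 : ℝ) < 2 ^ n := by positivity
    have hpow : ((2 : ℝ) ^ (n + 1)) = 2 * 2 ^ n := by ring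
    rcases le_or_gt k (2 ^ n) with hk' | hk'
    · -- use the left half: recurse between x and m
      obtain ⟨z, hz1, hz2⟩ := ih x m k hk' (ε / 2) (by linarith)
      have hq0 : (0 : ℝ) ≤ (k : ℝ) / 2 ^ n := by positivity
      have hq1 : (k : ℝ) / 2 ^ n ≤ 1 := by
        rw [div_le_one hN]; exact_mod_cast hk'
      have htri : dist z y ≤ dist z m + dist m y := dist_triangle z m y
      have hmul : ((k : ℝ) / 2 ^ n) * dist x m ≤
          ((k : ℝ) / 2 ^ n) * (ε / 4 + dist x y / 2) :=
        mul_le_mul_of_nonneg_left hm1.le hq0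
      have hmul2 : (1 - (k : ℝ) / 2 ^ n) * dist x m ≤
          (1 - (k : ℝ) / 2 ^ n) * (ε / 4 + dist x y / 2) :=
        mul_le_mul_of_nonneg_left hm1.le (by linarith)
      refine ⟨z, ?_, ?_⟩
      · have : ((k : ℝ) / 2 ^ (n + 1)) * dist x y = (((k : ℝ) / 2 ^ n) * (dist x y / 2)) := by
          rw [hpow]; ring
        rw [this]
        nlinarith
      · have : (1 - (k : ℝ) / 2 ^ (n + 1)) * dist x y
            = (1 - (k : ℝ) / 2 ^ n) * (dist x y / 2) + dist x y / 2 := by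
          rw [hpow]; ring
        rw [this]
        nlinarith
    · -- use the right half: recurse between m and y with k' = k - 2^n
      set k' : ℕ := k - 2 ^ n with hk'def
      have hkk : k = 2 ^ n + k' := by omega
      have hk'le : k' ≤ 2 ^ n := by
        have : k ≤ 2 ^ (n + 1) := hk
        have h2 : (2 : ℕ) ^ (n + 1) = 2 ^ n + 2 ^ n := by ring
        omega
      obtain ⟨z, hz1, hz2⟩ := ih m y k' hk'le (ε / 2) (by linarith)
      have hq0 : (0 : ℝ) ≤ (k' : ℝ) / 2 ^ n := by positivity
      have hq1 : (k' : ℝ) / 2 ^ n ≤ 1 := by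
        rw [div_le_one hN]; exact_mod_cast hk'le
      have hkcast : (k : ℝ) = 2 ^ n + (k' : ℝ) := by exact_mod_cast congrArg (Nat.cast : ℕ → ℝ) hkk
      have htri : dist x z ≤ dist x m + dist m z := dist_triangle x m z
      have hmul : ((k' : ℝ) / 2 ^ n) * dist m y ≤
          ((k' : ℝ) / 2 ^ n) * (ε / 4 + dist x y / 2) :=
        mul_le_mul_of_nonneg_left hm2.le hq0
      have hmul2 : (1 - (k' : ℝ) / 2 ^ n) * dist m y ≤
          (1 - (k' : ℝ) / 2 ^ n) * (ε / 4 + dist x y / 2) :=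
        mul_le_mul_of_nonneg_left hm2.le (by linarith)
      refine ⟨z, ?_, ?_⟩
      · have : ((k : ℝ) / 2 ^ (n + 1)) * dist x y
            = ((k' : ℝ) / 2 ^ n) * (dist x y / 2) + dist x y / 2 := by
          rw [hpow, hkcast]; field_simp; ring
        rw [this]
        nlinarith
      · have : (1 - (k : ℝ) / 2 ^ (n + 1)) * dist x y
            = (1 - (k' : ℝ) / 2 ^ n) * (dist x y / 2) := by
          rw [hpow, hkcast]; field_simp; ring
        rw [this]
        nlinarith

/-- Key consequence of AMP: any point closer than `r + s` can be split. -/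
lemma split_point {X : Type*} [MetricSpace X] (h : ApproxMidpointProperty X)
    (x y : X) (r s : ℝ) (hr : 0 < r) (hs : 0 < s) (hd : dist x y < r + s) :
    ∃ z : X, dist x z < r ∧ dist z y < s := by
  set d := dist x y with hdd
  rcases eq_or_lt_of_le (dist_nonneg : (0:ℝ) ≤ d) with h0 | h0
  · exact ⟨x, by simpa using hr, by rw [dist_comm] at h0 ⊢; simpa [← h0] using hs⟩
  -- d > 0
  set a : ℝ := max 0 ((d - s) / d) with ha
  set b : ℝ := min 1 (r / d) with hb
  have h1 : (d - s) / d < 1 := by rw [div_lt_one h0]; linarith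
  have h2 : (d - s) / d < r / d := (div_lt_div_iff_of_pos_right h0).mpr (by linarith)
  have h3 : (0 : ℝ) < r / d := by positivity
  have hab : a < b := max_lt (lt_min one_pos h3) (lt_min h1 h2)
  have ha0 : 0 ≤ a := le_max_left _ _
  have hb1 : b ≤ 1 := min_le_left _ _
  have hbr : b ≤ r / d := min_le_right _ _
  have haud : (d - s) / d ≤ a := le_max_right _ _
  obtain ⟨n, hn⟩ := exists_pow_lt_of_lt_one (by linarith : (0:ℝ) < b - a)
    (by norm_num : (1/2 : ℝ) < 1)
  have hN : (0 : ℝ) < 2 ^ n := by positivity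
  have hfrac : (1 : ℝ) < (b - a) * 2 ^ n := by
    have : ((1:ℝ)/2) ^ n = 1 / 2 ^ n := by rw [div_pow, one_pow]
    rw [this, div_lt_iff₀ hN] at hn
    linarith
  have hfl : (0 : ℤ) ≤ ⌊a * 2 ^ n⌋ := Int.floor_nonneg.mpr (by positivity)
  set k : ℕ := (⌊a * 2 ^ n⌋).toNat + 1 with hkdef
  have hkcast : (k : ℝ) = (⌊a * 2 ^ n⌋ : ℝ) + 1 := by
    have : ((⌊a * 2 ^ n⌋).toNat : ℝ) = (⌊a * 2 ^ n⌋ : ℝ) := by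
      exact_mod_cast Int.toNat_of_nonneg hfl
    rw [hkdef]; push_cast [this]; ring
  have hk1 : a * 2 ^ n < (k : ℝ) := by rw [hkcast]; exact Int.lt_floor_add_one _
  have hk2 : (k : ℝ) ≤ a * 2 ^ n + 1 := by
    rw [hkcast]; linarith [Int.floor_le (a * 2 ^ n)]
  have hk3 : (k : ℝ) < b * 2 ^ n := by nlinarith
  have hkle : k ≤ 2 ^ n := by
    have : (k : ℝ) < (2 ^ n : ℝ) := lt_of_lt_of_le hk3 (by nlinarith)
    exact_mod_cast this.le
  set t : ℝ := (k : ℝ) / 2 ^ n with ht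
  have hta : a < t := by rw [ht, lt_div_iff₀ hN]; linarith
  have htb : t < b := by rw [ht, div_lt_iff₀ hN]; linarith
  have htr : t * d < r := by
    have : t < r / d := lt_of_lt_of_le htb hbr
    calc t * d < (r / d) * d := by nlinarith
    _ = r := by field_simp; exact div_self (ne_of_gt h0)
  have hts : d - s < t * d := by
    have : (d - s) / d < t := lt_of_le_of_lt haud hta
    calc d - s = ((d - s) / d) * d := by field_simp; exact (mul_div_cancel_left₀ (d - s) (ne_of_gt h0 : d ≠ 0)).symm
    _ < t * d := by nlinarith
  set ε : ℝ := min (r - t * d) (s - (d - t * d)) with hε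
  have hεpos : 0 < ε := lt_min (by linarith) (by linarith)
  obtain ⟨z, hz1, hz2⟩ := dyadic_point h n x y k hkle ε hεpos
  refine ⟨z, ?_, ?_⟩
  · have := min_le_left (r - t * d) (s - (d - t * d))
    rw [← hε] at this
    calc dist x z < t * d + ε := hz1
    _ ≤ r := by linarith
  · have := min_le_right (r - t * d) (s - (d - t * d))
    rw [← hε] at this
    have hexp : (1 - t) * d = d - t * d := by ring
    calc dist z y < (1 - t) * d + ε := hz2
    _ ≤ s := by rw [hexp]; linarith

/-- For a metric space `X` the following are equivalent: (a) `X` has the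
approximate midpoint property; (b) `Bl(x,r,s) = B(x,r+s)` for all `x` and all
`r, s > 0`; (c) `Bl(x,r,r) = B(x,2r)` for all `x` and all `r > 0`. -/
theorem approx_midpoint_iff_blossom {X : Type*} [MetricSpace X] :
    (ApproxMidpointProperty X ↔
      ∀ (x : X) (r s : ℝ), 0 < r → 0 < s → Bl (ball x r) s = ball x (r + s)) ∧
    (ApproxMidpointProperty X ↔
      ∀ (x : X) (r : ℝ), 0 < r → Bl (ball x r) r = ball x (2 * r)) := by
  have hAB : ApproxMidpointProperty X →
      ∀ (x : X) (r s : ℝ), 0 < r → 0 < s → Bl (ball x r) s = ball x (r + s) := by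
    intro h x r s hr hs
    ext y
    simp only [Bl, Set.mem_iUnion, mem_ball, exists_prop]
    constructor
    · rintro ⟨w, hw1, hw2⟩
      calc dist y x ≤ dist y w + dist w x := dist_triangle y w x
      _ < s + r := add_lt_add hw2 hw1
      _ = r + s := by ring
    · intro hy
      have : dist x y < r + s := by rwa [dist_comm]
      obtain ⟨z, hz1, hz2⟩ := split_point h x y r s hr hs this
      exact ⟨z, by rwa [dist_comm], by rwa [dist_comm]⟩
  have hBC : (∀ (x : X) (r s : ℝ), 0 < r → 0 < s → Bl (ball x r) s = ball x (r + s)) →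
      ∀ (x : X) (r : ℝ), 0 < r → Bl (ball x r) r = ball x (2 * r) := by
    intro h x r hr
    rw [h x r r hr hr]; norm_num [two_mul]
  have hCA : (∀ (x : X) (r : ℝ), 0 < r → Bl (ball x r) r = ball x (2 * r)) →
      ApproxMidpointProperty X := by
    intro h ε hε x y
    set r : ℝ := dist x y / 2 + ε / 2 with hrdef
    have hr : 0 < r := by have := dist_nonneg (x := x) (y := y); positivity
    have hy : y ∈ ball x (2 * r) := by
      rw [mem_ball, dist_comm]
      rw [hrdef]; linarith
    rw [← h x r hr] at hy
    simp only [Bl, Set.mem_iUnion, mem_ball, exists_prop] at hy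
    obtain ⟨z, hz1, hz2⟩ := hy
    refine ⟨z, ?_, ?_⟩
    · rw [dist_comm] at hz1; rw [hrdef] at hz1; linarith
    · rw [dist_comm] at hz2; rw [hrdef] at hz2; linarith
  exact ⟨⟨hAB, fun hB => hCA (hBC hB)⟩, ⟨fun hA => hBC (hAB hA), hCA⟩⟩
end

section
/- Let d ≥ 1, equip ℤ^d with the ℓ_∞ metric d(x,y) = max_i |x_i − y_i|, and let μ be the counting measure. Then μ(B(0,1)) = 1, while for every t > 0, μ(B(0,1+t)) ≥ 3^d. Consequently, for every t > 0 and every K < 3^d, μ is not (t,K)-microdoubling: there exist x ∈ ℤ^d and r > 0 with μ(B(x,(1+t)r)) > K·μ(B(x,r)). -/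
open MeasureTheory Metric ENNReal

/-- In `ℤ^d` with the `ℓ_∞` metric (the sup metric of `Fin d → ℤ`) and the
counting measure: the unit ball at `0` is a singleton, every ball `B(0,1+t)`
with `t > 0` has at least `3^d` points, and hence the counting measure is not
`(t,K)`-microdoubling for any `t > 0` and `K < 3^d`. -/
theorem counting_measure_not_microdoubling (d : ℕ) (hd : 1 ≤ d) :
    Measure.count (ball (0 : Fin d → ℤ) 1) = 1 ∧
    (∀ t : ℝ, 0 < t →
      (3 : ℝ≥0∞) ^ d ≤ Measure.count (ball (0 : Fin d → ℤ) (1 + t))) ∧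
    (∀ t K : ℝ, 0 < t → K < 3 ^ d →
      ∃ (x : Fin d → ℤ) (r : ℝ), 0 < r ∧
        ENNReal.ofReal K * Measure.count (ball x r) <
          Measure.count (ball x ((1 + t) * r))) := by
  have hball1 : ball (0 : Fin d → ℤ) 1 = {0} := by
    ext f
    simp only [mem_ball, Set.mem_singleton_iff]
    constructor
    · intro h
      funext i
      show f i = 0
      have hi := (dist_pi_lt_iff one_pos).mp h i
      rw [Int.dist_eq] at hi
      have h1 : |(f i : ℝ) - (0 : Fin d → ℤ) i| < 1 := hi
      simp only [Pi.zero_apply, Int.cast_zero, sub_zero] at h1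
      rw [abs_lt] at h1
      have h2 : -1 < f i := by exact_mod_cast h1.1
      have h3 : f i < 1 := by exact_mod_cast h1.2
      omega
    · rintro rfl
      simpa using one_pos
  have h1 : Measure.count (ball (0 : Fin d → ℤ) 1) = 1 := by
    rw [hball1, Measure.count_singleton]
  have key : ∀ t : ℝ, 0 < t →
      (3 : ℝ≥0∞) ^ d ≤ Measure.count (ball (0 : Fin d → ℤ) (1 + t)) := by
    intro t ht
    set F : Finset (Fin d → ℤ) :=
      Fintype.piFinset (fun _ => ({-1, 0, 1} : Finset ℤ)) with hF
    have hcard : F.card = 3 ^ d := by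
      simp [hF, Fintype.card_piFinset]
    have hsub : (F : Set (Fin d → ℤ)) ⊆ ball 0 (1 + t) := by
      intro f hf
      rw [mem_ball, dist_pi_lt_iff (by linarith)]
      intro i
      have hi : f i ∈ ({-1, 0, 1} : Finset ℤ) :=
        Fintype.mem_piFinset.mp hf i
      have hi' : f i = -1 ∨ f i = 0 ∨ f i = 1 := by simpa using hi
      rw [Int.dist_eq]
      have : ((0 : Fin d → ℤ) i : ℝ) = 0 := by simp
      rcases hi' with h | h | h <;> rw [h] <;> simp [this] <;> linarith
    calc (3 : ℝ≥0∞) ^ d = (F.card : ℝ≥0∞) := by rw [hcard]; push_cast; ring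
      _ = Measure.count (F : Set (Fin d → ℤ)) := (Measure.count_apply_finset F).symm
      _ ≤ _ := measure_mono hsub
  refine ⟨h1, key, ?_⟩
  intro t K ht hK
  refine ⟨0, 1, one_pos, ?_⟩
  rw [mul_one, h1, mul_one]
  calc ENNReal.ofReal K < (3 : ℝ≥0∞) ^ d := by
        have h3 : (3 : ℝ≥0∞) ^ d = ENNReal.ofReal ((3 : ℝ) ^ d) := by
          rw [ENNReal.ofReal_pow (by norm_num)]
          norm_num
        rw [h3]
        exact (ENNReal.ofReal_lt_ofReal_iff (by positivity)).mpr hK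
    _ ≤ _ := key t ht
end

section
/- Let X = {0, 1, 3} with the metric inherited from ℝ, and let μ = δ₃ be the Dirac measure at 3. Then μ (1/2,1)-microblossoms boundedly: for all x ∈ X and r > 0, μ(Blu(x, r, r/2)) ≤ μ(B(x,r)). However, μ fails the local comparability condition: there exist x,y ∈ X and r > 0 with d(x,y) < r and μ(B(y,r)) = 0 < μ(B(x,r)) (for instance x = 1, y = 0, r = 5/2), so no constant C ≥ 1 satisfies μ(B(x,r)) ≤ C·μ(B(y,r)) for all x,y with d(x,y) < r. -/
open MeasureTheory Metric ENNReal

/-- The three-point space `X = {0, 1, 3}` with the metric inherited from `ℝ`. -/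
abbrev ThreePt : Type := {x : ℝ // x = 0 ∨ x = 1 ∨ x = 3}

/-- The Dirac measure `δ₃` on `{0, 1, 3}`. -/
noncomputable def diracThree : Measure ThreePt :=
  Measure.dirac ⟨3, by norm_num⟩

set_option maxHeartbeats 2000000 in
lemma keyArith {xr zr yr r : ℝ} (hx : xr = 0 ∨ xr = 1 ∨ xr = 3)
    (hz : zr = 0 ∨ zr = 1 ∨ zr = 3) (hy : yr = 0 ∨ yr = 1 ∨ yr = 3)
    (h1 : |zr - xr| < r) (h2 : |zr - yr| < 1 / 2 * r) (h3 : |3 - yr| < 1 / 2 * r) :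
    |3 - xr| < r := by
  rw [abs_sub_lt_iff] at *
  rcases hx with rfl | rfl | rfl <;> rcases hz with rfl | rfl | rfl <;>
    rcases hy with rfl | rfl | rfl <;> constructor <;> linarith [h1.1, h1.2, h2.1, h2.2, h3.1, h3.2]

lemma dirac_ball (x : ThreePt) (r : ℝ) :
    diracThree (ball x r) = if |3 - x.1| < r then 1 else 0 := by
  classical
  rw [diracThree, Measure.dirac_apply, Set.indicator_apply]
  simp [mem_ball, Subtype.dist_eq, Real.dist_eq]

/-- On `X = {0,1,3} ⊆ ℝ`, the measure `δ₃` `(1/2,1)`-microblossoms boundedly,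
yet local comparability fails: there are `x, y` with `d(x,y) < r`,
`μ(B(y,r)) = 0` and `μ(B(x,r)) > 0` (e.g. `x = 1`, `y = 0`, `r = 5/2`), so no
constant `C ≥ 1` works. -/
theorem dirac_microblossoms_but_not_locally_comparable :
    (∀ (x : ThreePt) (r : ℝ), 0 < r →
      diracThree (Blu (ball x r) ((1 / 2) * r)) ≤ 1 * diracThree (ball x r)) ∧
    (∃ (x y : ThreePt) (r : ℝ), 0 < r ∧ dist x y < r ∧
      diracThree (ball y r) = 0 ∧ 0 < diracThree (ball x r)) ∧
    ¬ ∃ C : ℝ, 1 ≤ C ∧ ∀ (x y : ThreePt) (r : ℝ), 0 < r → dist x y < r →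
        diracThree (ball x r) ≤ ENNReal.ofReal C * diracThree (ball y r) := by
  classical
  refine ⟨?_, ?_, ?_⟩
  · intro x r hr
    rw [one_mul, diracThree, Measure.dirac_apply, Set.indicator_apply]
    split_ifs with h
    · obtain ⟨z, hz, y, hy1, hy2⟩ : ∃ z ∈ ball x r, ∃ y, z ∈ ball y ((1/2)*r) ∧
          (⟨3, by norm_num⟩ : ThreePt) ∈ ball y ((1/2)*r) := by
        simpa [Blu] using h
      have h3x : (⟨3, by norm_num⟩ : ThreePt) ∈ ball x r := by
        rw [mem_ball, Subtype.dist_eq, Real.dist_eq]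
        rw [mem_ball, Subtype.dist_eq, Real.dist_eq] at hz hy1 hy2
        exact keyArith x.2 z.2 y.2 hz hy1 hy2
      rw [Measure.dirac_apply, Set.indicator_of_mem h3x]
    · exact zero_le
  · refine ⟨⟨1, by norm_num⟩, ⟨0, by norm_num⟩, 5/2, by norm_num, ?_, ?_, ?_⟩
    · rw [Subtype.dist_eq, Real.dist_eq]; norm_num
    · rw [dirac_ball]; norm_num
    · rw [dirac_ball]; norm_num
  · rintro ⟨C, hC, h⟩
    have := h ⟨1, by norm_num⟩ ⟨0, by norm_num⟩ (5/2) (by norm_num)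
      (by rw [Subtype.dist_eq, Real.dist_eq]; norm_num)
    rw [dirac_ball, dirac_ball] at this
    norm_num at this
end

section
/- Let X = ({0} × [0,1]) ∪ ([0,1] × {0}) ⊂ ℝ², equipped with the metric obtained by restricting the ℓ_∞ norm of ℝ². Then (i) B((1,0), 1) = (0,1] × {0}; (ii) for every r > 1, B((1,0), r) = X; and (iii) X is not contained in the uncentered blossom Blu((1,0), 1, 1/6). -/
open Metric

/-- The cross `({0} × [0,1]) ∪ ([0,1] × {0}) ⊆ ℝ²`, where `ℝ² = ℝ × ℝ` carries
the `ℓ_∞` (sup) metric `d(u,v) = max(|u₁ − v₁|, |u₂ − v₂|)`, which is the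
product metric of `ℝ × ℝ`. -/
abbrev Cross : Type :=
  {p : ℝ × ℝ // p ∈ ({0} ×ˢ Set.Icc (0:ℝ) 1) ∪ (Set.Icc (0:ℝ) 1 ×ˢ {0})}

/-- The point `(1,0)` of the cross. -/
def crossPt : Cross :=
  ⟨(1, 0), Or.inr (Set.mk_mem_prod (by norm_num) rfl)⟩

lemma cross_dist (p q : Cross) : dist p q = max |p.1.1 - q.1.1| |p.1.2 - q.1.2| := by
  rw [Subtype.dist_eq, Prod.dist_eq, Real.dist_eq, Real.dist_eq]

lemma cross_ball_one :
    ball crossPt 1 = Subtype.val ⁻¹' (Set.Ioc (0:ℝ) 1 ×ˢ ({0} : Set ℝ)) := by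
  ext ⟨⟨a, b⟩, hp⟩
  simp only [Set.mem_union, Set.mem_prod, Set.mem_singleton_iff, Set.mem_Icc] at hp
  simp only [mem_ball, cross_dist, crossPt, Set.mem_preimage, Set.mem_prod,
    Set.mem_Ioc, Set.mem_singleton_iff, max_lt_iff, abs_sub_lt_iff]
  constructor
  · rintro ⟨⟨h1, h2⟩, h3, h4⟩
    rcases hp with ⟨rfl, _, _⟩ | ⟨⟨_, ha1⟩, rfl⟩
    · linarith
    · exact ⟨⟨by linarith, ha1⟩, rfl⟩
  · rintro ⟨⟨ha0, ha1⟩, rfl⟩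
    refine ⟨⟨by linarith, by linarith⟩, by norm_num, by norm_num⟩

/-- In the cross `X = ({0} × [0,1]) ∪ ([0,1] × {0})` with the restricted
`ℓ_∞` metric: (i) `B((1,0),1) = (0,1] × {0}`; (ii) `B((1,0),r) = X` for every
`r > 1`; (iii) `X` is not contained in `Blu((1,0), 1, 1/6)`. -/
theorem cross_ball_blossom :
    ball crossPt 1 = Subtype.val ⁻¹' (Set.Ioc (0:ℝ) 1 ×ˢ ({0} : Set ℝ)) ∧
    (∀ r : ℝ, 1 < r → ball crossPt r = Set.univ) ∧
    ¬ (Set.univ : Set Cross) ⊆ Blu (ball crossPt 1) (1 / 6) := by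
  refine ⟨cross_ball_one, ?_, ?_⟩
  · intro r hr
    ext ⟨⟨a, b⟩, hp⟩
    simp only [Set.mem_union, Set.mem_prod, Set.mem_singleton_iff, Set.mem_Icc] at hp
    simp only [mem_ball, cross_dist, crossPt, Set.mem_univ, iff_true, max_lt_iff,
      abs_sub_lt_iff]
    rcases hp with ⟨rfl, h0, h1⟩ | ⟨⟨h0, h1⟩, rfl⟩ <;>
      exact ⟨⟨by linarith, by linarith⟩, by linarith, by linarith⟩
  · intro h
    have htop : ((0:ℝ), (1:ℝ)) ∈ ({0} ×ˢ Set.Icc (0:ℝ) 1) ∪ (Set.Icc (0:ℝ) 1 ×ˢ {0}) :=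
      Or.inl ⟨rfl, by norm_num, le_refl 1⟩
    have := h (Set.mem_univ (⟨((0:ℝ), (1:ℝ)), htop⟩ : Cross))
    simp only [Blu, Set.mem_iUnion, Set.mem_setOf_eq, exists_prop] at this
    obtain ⟨x, hx, y, hy, hmem⟩ := this
    rw [cross_ball_one] at hx
    obtain ⟨⟨ha0, ha1⟩, hb⟩ := hx
    rw [mem_ball, cross_dist, max_lt_iff] at hy hmem
    obtain ⟨_, hy2⟩ := hy
    obtain ⟨_, hm2⟩ := hmem
    rw [hb] at hy2
    have h1 := abs_lt.mp hy2
    have h2 := abs_lt.mp hm2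
    simp at h1 h2
    linarith [h1.2, h2.1]
end

section
/- Let X = {u ∈ ℝ² : |u| = 1} be the unit circle with the chordal metric, i.e., the restriction to X of the Euclidean metric of ℝ². Then (i) X does not have the approximate midpoint property; (ii) B((1,0), 2) = X \ {(−1,0)}; (iii) Bl((1,0), √2, √2) = B((1,0), 2); and (iv) Bl((1,0), 1, 1) ≠ B((1,0), 2). -/
open Metric

/-- The unit circle in the plane (identified with `ℂ`) with the chordal
metric, i.e. the restriction of the Euclidean metric of the plane. -/
abbrev Circle' : Type := ↥(sphere (0 : ℂ) 1)

/-- The point `(1,0)` of the unit circle. -/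
def circOne : Circle' := ⟨1, by simp⟩

/-- The point `(−1,0)` of the unit circle. -/
def circNegOne : Circle' := ⟨-1, by simp⟩

/-- Any point of the circle has `re² + im² = 1`. -/
lemma circ_sq (u : Circle') : (u:ℂ).re^2 + (u:ℂ).im^2 = 1 := by
  have h : ‖(u:ℂ)‖ = 1 := mem_sphere_zero_iff_norm.mp u.2
  have h2 : ‖(u:ℂ)‖ ^ 2 = Complex.normSq (u:ℂ) := Complex.sq_norm _
  rw [h] at h2
  simp [Complex.normSq_apply] at h2
  nlinarith [h2]

/-- The chordal distance on the circle, squared, in terms of coordinates. -/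
lemma dist_lt_iff_sq (u v : Circle') {r : ℝ} (hr : 0 < r) :
    dist u v < r ↔ ((u:ℂ).re - (v:ℂ).re)^2 + ((u:ℂ).im - (v:ℂ).im)^2 < r^2 := by
  have hd : dist u v ^ 2 = ((u:ℂ).re - (v:ℂ).re)^2 + ((u:ℂ).im - (v:ℂ).im)^2 := by
    rw [Subtype.dist_eq, Complex.dist_eq, Complex.sq_norm]
    simp [Complex.normSq_apply]
    ring
  constructor <;> intro h <;> nlinarith [dist_nonneg (x := u) (y := v)]

/-- Membership in the circle from coordinates. -/
lemma mem_circle_of (a b : ℝ) (h : a^2 + b^2 = 1) : (⟨a, b⟩ : ℂ) ∈ sphere (0:ℂ) 1 := by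
  rw [mem_sphere_zero_iff_norm, Complex.norm_def,
    Complex.normSq_apply]
  simp only
  rw [show a * a + b * b = 1 by nlinarith]
  exact Real.sqrt_one

lemma part_i : ¬ ApproxMidpointProperty Circle' := by
  -- (i) no approximate midpoint property
  intro h
  obtain ⟨z, h1, h2⟩ := h (1/4) (by norm_num) circOne circNegOne
  have hdist : dist circOne circNegOne = 2 := by
    rw [Subtype.dist_eq, Complex.dist_eq]
    simp [circOne, circNegOne]
    norm_num
  rw [hdist] at h1 h2
  norm_num at h1 h2
  rw [dist_lt_iff_sq _ _ (by norm_num)] at h1 h2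
  have hz := circ_sq z
  simp only [circOne, circNegOne, Complex.one_re, Complex.one_im, Complex.neg_re,
    Complex.neg_im, Complex.one_re, Complex.one_im] at h1 h2
  nlinarith [h1, h2, hz]

lemma part_ii : ball circOne 2 = (Set.univ : Set Circle') \ {circNegOne} := by
  -- (ii) B((1,0),2) = X \ {(-1,0)}
  ext u
  have hu := circ_sq u
  rw [mem_ball, dist_lt_iff_sq u circOne (by norm_num)]
  simp only [circOne, circNegOne, Set.mem_diff, Set.mem_univ, Set.mem_singleton_iff,
    true_and, Complex.one_re, Complex.one_im]
  constructor
  · intro h hc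
    rw [Subtype.ext_iff] at hc
    have : (u:ℂ).re = -1 := by rw [hc]; simp
    have : (u:ℂ).im = 0 := by rw [hc]; simp
    nlinarith
  · intro h
    have ha : -1 ≤ (u:ℂ).re := by nlinarith [sq_nonneg (u:ℂ).im]
    rcases eq_or_lt_of_le ha with he | hl
    · exfalso
      apply h
      have him : (u:ℂ).im = 0 := by nlinarith
      apply Subtype.ext
      apply Complex.ext <;> simp [← he, him]
    · nlinarith

lemma part_iii : Bl (ball circOne (Real.sqrt 2)) (Real.sqrt 2) = ball circOne 2 := by
  -- (iii) Bl(B((1,0),√2), √2) = B((1,0),2)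
  have hs2 : (Real.sqrt 2)^2 = 2 := Real.sq_sqrt (by norm_num)
  have hs2p : (0:ℝ) < Real.sqrt 2 := Real.sqrt_pos.mpr (by norm_num)
  ext u
  have hu := circ_sq u
  simp only [Bl, Set.mem_iUnion, mem_ball, exists_prop]
  constructor
  · rintro ⟨x, hx1, hx2⟩
    have hx := circ_sq x
    rw [dist_lt_iff_sq _ _ hs2p, hs2] at hx1 hx2
    rw [dist_lt_iff_sq _ _ (by norm_num : (0:ℝ) < 2)]
    simp only [circOne, Complex.one_re, Complex.one_im] at hx1 ⊢
    have hc : (0:ℝ) < (x:ℂ).re := by nlinarith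
    have hip : (u:ℂ).re * (x:ℂ).re + (u:ℂ).im * (x:ℂ).im > 0 := by nlinarith
    have ha : -1 ≤ (u:ℂ).re := by nlinarith [sq_nonneg (u:ℂ).im]
    rcases eq_or_lt_of_le ha with he | hl
    · exfalso
      have him : (u:ℂ).im = 0 := by nlinarith
      rw [← he, him] at hip
      nlinarith
    · nlinarith
  · intro h
    rw [dist_lt_iff_sq _ _ (by norm_num : (0:ℝ) < 2)] at h
    simp only [circOne, Complex.one_re, Complex.one_im] at h
    obtain ⟨a, b, hare, haim⟩ : ∃ a b : ℝ, (u:ℂ).re = a ∧ (u:ℂ).im = b := ⟨_, _, rfl, rfl⟩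
    rw [hare, haim] at h hu
    have ha : -1 < a := by nlinarith
    obtain ⟨c, hcpos, hcsq⟩ : ∃ c : ℝ, 0 < c ∧ c^2 = (1+a)/2 :=
      ⟨Real.sqrt ((1+a)/2), Real.sqrt_pos.mpr (by linarith),
        Real.sq_sqrt (by linarith)⟩
    obtain ⟨s, hbs⟩ : ∃ s : ℝ, b = 2*c*s := ⟨b/(2*c), by field_simp⟩
    have hb2 : b^2 = 2*(1+a)*s^2 := by
      have h4 : b^2 = 4*c^2*s^2 := by rw [hbs]; ring
      rw [h4, hcsq]; ring
    have hseq : (1+a) * (2*s^2) = (1+a) * (1-a) := by linear_combination hu - hb2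
    have hs2q : 2*s^2 = 1-a := mul_left_cancel₀ (by linarith : (0:ℝ) < 1+a).ne' hseq
    have hcs : c^2 + s^2 = 1 := by rw [hcsq]; linarith
    refine ⟨⟨⟨c, s⟩, mem_circle_of c s hcs⟩, ?_, ?_⟩
    · rw [dist_lt_iff_sq _ _ hs2p, hs2]
      have e1 : ((⟨⟨c, s⟩, mem_circle_of c s hcs⟩ : Circle') : ℂ).re = c := rfl
      have e2 : ((⟨⟨c, s⟩, mem_circle_of c s hcs⟩ : Circle') : ℂ).im = s := rfl
      rw [e1, e2]
      simp only [circOne, Complex.one_re, Complex.one_im]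
      have expand : (c - 1)^2 + (s - 0)^2 = 2 - 2*c := by linear_combination hcs
      rw [expand]; linarith
    · rw [dist_lt_iff_sq _ _ hs2p, hs2, hare, haim]
      have e1 : ((⟨⟨c, s⟩, mem_circle_of c s hcs⟩ : Circle') : ℂ).re = c := rfl
      have e2 : ((⟨⟨c, s⟩, mem_circle_of c s hcs⟩ : Circle') : ℂ).im = s := rfl
      rw [e1, e2]
      have key : a*c + b*s > 0 := by
        have h1 : a*c + b*s = c*(a + 2*s^2) := by rw [hbs]; ring
        have h2 : a + 2*s^2 = 1 := by linarith
        rw [h1, h2]; linarith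
      have expand : (a - c)^2 + (b - s)^2 = 2 - 2*(a*c + b*s) := by
        linear_combination hu + hcs
      rw [expand]; linarith

lemma part_iv : Bl (ball circOne 1) 1 ≠ ball circOne 2 := by
  -- (iv) Bl(B((1,0),1), 1) ≠ B((1,0),2)
  have hs3 : (Real.sqrt 3)^2 = 3 := Real.sq_sqrt (by norm_num)
  have hs3p : (0:ℝ) < Real.sqrt 3 := Real.sqrt_pos.mpr (by norm_num)
  intro h
  have humem : ((-1/2 : ℝ))^2 + (Real.sqrt 3 / 2)^2 = 1 := by nlinarith
  have hmem : (⟨⟨-1/2, Real.sqrt 3 / 2⟩, mem_circle_of _ _ humem⟩ : Circle')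
      ∈ ball circOne 2 := by
    rw [mem_ball, dist_lt_iff_sq _ _ (by norm_num : (0:ℝ) < 2)]
    have e1 : ((⟨⟨-1/2, Real.sqrt 3 / 2⟩, mem_circle_of _ _ humem⟩ :
        Circle') : ℂ).re = -1/2 := rfl
    have e2 : ((⟨⟨-1/2, Real.sqrt 3 / 2⟩, mem_circle_of _ _ humem⟩ :
        Circle') : ℂ).im = Real.sqrt 3 / 2 := rfl
    rw [e1, e2]
    simp only [circOne, Complex.one_re, Complex.one_im]
    nlinarith
  rw [← h] at hmem
  simp only [Bl, Set.mem_iUnion, mem_ball, exists_prop] at hmem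
  obtain ⟨x, hx1, hx2⟩ := hmem
  have hx := circ_sq x
  rw [dist_lt_iff_sq _ _ (by norm_num : (0:ℝ) < 1)] at hx1 hx2
  simp only [circOne, Complex.one_re, Complex.one_im] at hx1
  have e1 : ((⟨⟨-1/2, Real.sqrt 3 / 2⟩, mem_circle_of _ _ humem⟩ :
      Circle') : ℂ).re = -1/2 := rfl
  have e2 : ((⟨⟨-1/2, Real.sqrt 3 / 2⟩, mem_circle_of _ _ humem⟩ :
      Circle') : ℂ).im = Real.sqrt 3 / 2 := rfl
  rw [e1, e2] at hx2
  obtain ⟨c, d, hcre, hdim⟩ : ∃ c d : ℝ, (x:ℂ).re = c ∧ (x:ℂ).im = d := ⟨_, _, rfl, rfl⟩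
  rw [hcre, hdim] at hx1 hx2 hx
  clear e1 e2 hcre hdim x h
  have hc : c > 1/2 := by nlinarith
  have hd : Real.sqrt 3 * d > 1 + c := by nlinarith
  nlinarith [mul_pos (by linarith : (0:ℝ) < Real.sqrt 3 * d - (1 + c))
    (by nlinarith : (0:ℝ) < Real.sqrt 3 * d + (1 + c)), hs3, hx, hc]

/-- For the unit circle `X` with the chordal metric: (i) `X` does not have the
approximate midpoint property; (ii) `B((1,0), 2) = X \ {(−1,0)}`;
(iii) `Bl((1,0), √2, √2) = B((1,0), 2)`; (iv) `Bl((1,0), 1, 1) ≠ B((1,0), 2)`. -/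
theorem circle_chordal_blossoms :
    ¬ ApproxMidpointProperty Circle' ∧
    ball circOne 2 = (Set.univ : Set Circle') \ {circNegOne} ∧
    Bl (ball circOne (Real.sqrt 2)) (Real.sqrt 2) = ball circOne 2 ∧
    Bl (ball circOne 1) 1 ≠ ball circOne 2 := by
  exact ⟨part_i, part_ii, part_iii, part_iv⟩
end
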